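/- (One-third trick domination.) For i = 0, 1, 2, let D^i := ∪_{j∈ℤ} D^i_j, where D^i_j := { 2^{-j}([0,1) + m + (−1)^j · i/3) : m ∈ ℤ }. Then for every locally integrable f on ℝ and every x ∈ ℝ, Mf(x) ≤ 6 ( M^{D^0} f(x) + M^{D^1} f(x) ), where M is the maximal function over all finite intervals containing x and M^{D^i} is the maximal function over intervals of D^i containing x. -/
import Mathlib


open MeasureTheory ENNReal

noncomputable section

/-- Average of `f` over a set `I ⊆ ℝ` with respect to Lebesgue measure. -/
def iAvg (I : Set ℝ) (f : ℝ → ℝ) : ℝ :=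
  (volume I).toReal⁻¹ * ∫ x in I, f x

/-- A finite (bounded, nondegenerate) interval of `ℝ`. -/
def IsBoundedInterval (I : Set ℝ) : Prop :=
  ∃ a b : ℝ, a < b ∧ Set.Ioo a b ⊆ I ∧ I ⊆ Set.Icc a b

/-- The (uncentered) maximal function over all finite intervals containing `x`. -/
def intMaxFn (f : ℝ → ℝ) (x : ℝ) : ℝ≥0∞ :=
  ⨆ I : {I : Set ℝ // IsBoundedInterval I ∧ x ∈ I},
    ENNReal.ofReal (iAvg I.1 fun y => |f y|)

/-- The interval `2^{-j}([0,1) + m + (-1)^j i/3)` of the shifted grid `D^i`. -/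
def thirdGridInt (i : ℕ) (j m : ℤ) : Set ℝ :=
  Set.Ico ((2:ℝ) ^ (-j) * ((m : ℝ) + (-1:ℝ) ^ j * (i : ℝ) / 3))
    ((2:ℝ) ^ (-j) * ((m : ℝ) + 1 + (-1:ℝ) ^ j * (i : ℝ) / 3))

/-- The maximal function over the intervals of the grid `D^i` containing `x`. -/
def gridMaxFn (i : ℕ) (f : ℝ → ℝ) (x : ℝ) : ℝ≥0∞ :=
  ⨆ jm : {jm : ℤ × ℤ // x ∈ thirdGridInt i jm.1 jm.2},
    ENNReal.ofReal (iAvg (thirdGridInt i jm.1.1 jm.1.2) fun y => |f y|)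

/-- Distance from an integer to `ε/3` with `ε = ±1` is at least `1/3`. -/
lemma aux_int_dist_third (t : ℤ) {ε : ℝ} (hε : ε = 1 ∨ ε = -1) :
    (1:ℝ)/3 ≤ |(t:ℝ) - ε/3| := by
  rw [le_abs]
  rcases hε with h | h
  · subst h
    rcases le_or_gt t 0 with ht | ht
    · right; have : (t:ℝ) ≤ 0 := by exact_mod_cast ht
      linarith
    · left; have : (1:ℝ) ≤ (t:ℝ) := by exact_mod_cast ht
      linarith
  · subst h
    rcases le_or_gt t (-1) with ht | ht
    · right; have : (t:ℝ) ≤ -1 := by exact_mod_cast ht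
      linarith
    · left
      have ht' : (0:ℤ) ≤ t := by omega
      have : (0:ℝ) ≤ (t:ℝ) := by exact_mod_cast ht'
      linarith

/-- If the shifted grid `δ(ℤ + s)` has no point in `[a,b]`, then `[a,b]` is contained
in a single grid interval. -/
lemma aux_grid_contain {δ s a b : ℝ} (hδ : 0 < δ)
    (h : ∀ k : ℤ, δ * ((k:ℝ) + s) ∉ Set.Icc a b) :
    ∃ m : ℤ, Set.Icc a b ⊆ Set.Ico (δ * ((m:ℝ) + s)) (δ * ((m:ℝ) + 1 + s)) := by
  refine ⟨⌊a/δ - s⌋, fun y hy => ?_⟩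
  have h1 : δ * ((⌊a/δ - s⌋:ℝ) + s) ≤ a := by
    have := Int.floor_le (a/δ - s)
    have h2 : (⌊a/δ - s⌋:ℝ) + s ≤ a/δ := by linarith
    calc δ * ((⌊a/δ - s⌋:ℝ) + s) ≤ δ * (a/δ) := by
          exact mul_le_mul_of_nonneg_left h2 hδ.le
      _ = a := by field_simp
  have h2 : a < δ * ((⌊a/δ - s⌋:ℝ) + 1 + s) := by
    have := Int.lt_floor_add_one (a/δ - s)
    have h3 : a/δ < (⌊a/δ - s⌋:ℝ) + 1 + s := by linarith
    calc a = δ * (a/δ) := by field_simp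
      _ < δ * ((⌊a/δ - s⌋:ℝ) + 1 + s) := by exact mul_lt_mul_of_pos_left h3 hδ
  have h3 : b < δ * ((⌊a/δ - s⌋:ℝ) + 1 + s) := by
    have hne := h (⌊a/δ - s⌋ + 1)
    have heq : δ * (((⌊a/δ - s⌋ + 1 : ℤ):ℝ) + s) = δ * ((⌊a/δ - s⌋:ℝ) + 1 + s) := by
      push_cast; ring
    rw [heq] at hne
    by_contra hb
    push_neg at hb
    exact hne ⟨h2.le, hb⟩
  exact ⟨le_trans h1 hy.1, lt_of_le_of_lt hy.2 h3⟩

/-- The one-third trick: every interval `[a,b]` is contained in an interval of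
grid `D⁰` or `D¹` of length at most `6(b-a)`. -/
lemma aux_one_third_trick {a b : ℝ} (hab : a < b) :
    ∃ i : ℕ, (i = 0 ∨ i = 1) ∧ ∃ j m : ℤ,
      Set.Icc a b ⊆ thirdGridInt i j m ∧ (2:ℝ) ^ (-j) ≤ 6 * (b - a) := by
  set ℓ : ℝ := b - a with hℓdef
  have hℓ : 0 < ℓ := by simp [hℓdef]; linarith
  obtain ⟨n, hn1, hn2⟩ := exists_mem_Ico_zpow (by linarith : (0:ℝ) < 3 * ℓ) one_lt_two
  set j : ℤ := -(n + 1) with hjdef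
  set δ : ℝ := (2:ℝ) ^ (n + 1) with hδdef
  have hδj : (2:ℝ) ^ (-j) = δ := by rw [hjdef, neg_neg]
  have hδpos : 0 < δ := zpow_pos (by norm_num) _
  have h3 : 3 * ℓ < δ := hn2
  have h6 : δ ≤ 6 * ℓ := by
    have : δ = 2 * (2:ℝ) ^ n := by
      rw [hδdef, zpow_add_one₀ (by norm_num : (2:ℝ) ≠ 0)]; ring
    linarith
  set ε : ℝ := (-1:ℝ) ^ j with hεdef
  have hε : ε = 1 ∨ ε = -1 := by
    rcases Int.even_or_odd j with h | h
    · left; rw [hεdef]; exact h.neg_one_zpow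
    · right; rw [hεdef]; exact h.neg_one_zpow
  have hgrid : ∀ (i : ℕ) (m : ℤ),
      thirdGridInt i j m = Set.Ico (δ * ((m:ℝ) + ε * (i:ℝ) / 3)) (δ * ((m:ℝ) + 1 + ε * (i:ℝ) / 3)) := by
    intro i m
    rw [thirdGridInt, hδj, hεdef]
  by_cases h0 : ∃ k : ℤ, δ * ((k:ℝ) + 0) ∈ Set.Icc a b
  · -- a grid-0 point is in [a,b]; then grid 1 has no point in [a,b]
    obtain ⟨k, hk⟩ := h0
    have hno : ∀ m : ℤ, δ * ((m:ℝ) + ε / 3) ∉ Set.Icc a b := by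
      intro m hm
      have hdist : |δ * ((k:ℝ) + 0) - δ * ((m:ℝ) + ε / 3)| ≤ ℓ := by
        rw [abs_sub_le_iff]
        constructor <;> [skip; skip] <;>
          simp only [Set.mem_Icc] at hk hm <;> rw [hℓdef] <;> linarith [hk.1, hk.2, hm.1, hm.2]
      have heq : δ * ((k:ℝ) + 0) - δ * ((m:ℝ) + ε / 3) = δ * (((k - m : ℤ):ℝ) - ε / 3) := by
        push_cast; ring
      rw [heq, abs_mul, abs_of_pos hδpos] at hdist
      have hlow : δ * (1/3) ≤ δ * |((k - m : ℤ):ℝ) - ε / 3| :=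
        mul_le_mul_of_nonneg_left (aux_int_dist_third (k - m) hε) hδpos.le
      linarith
    obtain ⟨m, hm⟩ := aux_grid_contain hδpos hno
    refine ⟨1, Or.inr rfl, j, m, ?_, by rw [hδj]; linarith⟩
    rw [hgrid 1 m]
    convert hm using 3 <;> push_cast <;> ring
  · -- grid 0 has no point in [a,b]
    push_neg at h0
    obtain ⟨m, hm⟩ := aux_grid_contain hδpos h0
    refine ⟨0, Or.inl rfl, j, m, ?_, by rw [hδj]; linarith⟩
    rw [hgrid 0 m]
    convert hm using 3 <;> push_cast <;> ring

/-- **one-third trick domination.** For every locally integrable `f` on `ℝ`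
and every `x`, `Mf(x) ≤ 6 (M^{D⁰} f(x) + M^{D¹} f(x))`. -/
theorem one_third_trick_domination (f : ℝ → ℝ)
    (hf : MeasureTheory.LocallyIntegrable f volume) (x : ℝ) :
    intMaxFn f x ≤ 6 * (gridMaxFn 0 f x + gridMaxFn 1 f x) := by
  rw [intMaxFn]
  refine iSup_le ?_
  rintro ⟨I, ⟨a, b, hab, hIoo, hIcc⟩, hxI⟩
  obtain ⟨i, hi01, j, m, hsub, hlen⟩ := aux_one_third_trick hab
  set J : Set ℝ := thirdGridInt i j m with hJdef
  set δ : ℝ := (2:ℝ) ^ (-j) with hδdef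
  have hδpos : 0 < δ := zpow_pos (by norm_num) _
  -- x ∈ J
  have hxJ : x ∈ thirdGridInt i j m := hsub (hIcc hxI)
  -- J is an Ico of length δ
  have hJvol : volume J = ENNReal.ofReal δ := by
    rw [hJdef, thirdGridInt, Real.volume_Ico]
    congr 1; ring
  -- |f| is integrable on J
  have hJsubIcc : J ⊆ Set.Icc ((2:ℝ) ^ (-j) * ((m:ℝ) + (-1:ℝ) ^ j * (i:ℝ) / 3))
      ((2:ℝ) ^ (-j) * ((m:ℝ) + 1 + (-1:ℝ) ^ j * (i:ℝ) / 3)) := Set.Ico_subset_Icc_self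
  have hintIcc : IntegrableOn (fun y => |f y|)
      (Set.Icc ((2:ℝ) ^ (-j) * ((m:ℝ) + (-1:ℝ) ^ j * (i:ℝ) / 3))
        ((2:ℝ) ^ (-j) * ((m:ℝ) + 1 + (-1:ℝ) ^ j * (i:ℝ) / 3))) volume :=
    (hf.integrableOn_isCompact isCompact_Icc).abs
  have hintJ : IntegrableOn (fun y => |f y|) J volume := hintIcc.mono_set hJsubIcc
  -- volume of I
  have hIvol : volume I = ENNReal.ofReal (b - a) := by
    apply le_antisymm
    · exact (measure_mono hIcc).trans_eq Real.volume_Icc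
    · exact Real.volume_Ioo ▸ measure_mono hIoo
  have hba : 0 < b - a := by linarith
  -- integral comparison
  have hIJ : I ⊆ J := fun y hy => hsub (hIcc hy)
  have hintle : (∫ y in I, |f y|) ≤ ∫ y in J, |f y| :=
    setIntegral_mono_set hintJ (Filter.Eventually.of_forall fun y => abs_nonneg _)
      (HasSubset.Subset.eventuallyLE hIJ)
  have hintJnn : 0 ≤ ∫ y in J, |f y| :=
    integral_nonneg fun y => abs_nonneg _
  -- real-valued inequality between averages
  have hreal : iAvg I (fun y => |f y|) ≤ 6 * iAvg J (fun y => |f y|) := by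
    rw [iAvg, iAvg, hIvol, hJvol, ENNReal.toReal_ofReal hba.le, ENNReal.toReal_ofReal hδpos.le]
    have hkey : (b - a)⁻¹ ≤ 6 * δ⁻¹ := by
      rw [inv_le_iff_one_le_mul₀ hba]
      calc (1:ℝ) = δ⁻¹ * δ := (inv_mul_cancel₀ hδpos.ne').symm
        _ ≤ δ⁻¹ * (6 * (b - a)) := mul_le_mul_of_nonneg_left hlen (by positivity)
        _ = 6 * δ⁻¹ * (b - a) := by ring
    calc (b - a)⁻¹ * ∫ y in I, |f y| ≤ (b - a)⁻¹ * ∫ y in J, |f y| :=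
          mul_le_mul_of_nonneg_left hintle (by positivity)
      _ ≤ (6 * δ⁻¹) * ∫ y in J, |f y| := mul_le_mul_of_nonneg_right hkey hintJnn
      _ = 6 * (δ⁻¹ * ∫ y in J, |f y|) := by ring
  -- pass to ENNReal
  have hJle : ENNReal.ofReal (iAvg J fun y => |f y|) ≤ gridMaxFn i f x := by
    rw [gridMaxFn]
    exact le_iSup (fun jm : {jm : ℤ × ℤ // x ∈ thirdGridInt i jm.1 jm.2} =>
      ENNReal.ofReal (iAvg (thirdGridInt i jm.1.1 jm.1.2) fun y => |f y|)) ⟨(j, m), hxJ⟩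
  have hgle : gridMaxFn i f x ≤ gridMaxFn 0 f x + gridMaxFn 1 f x := by
    rcases hi01 with h | h <;> subst h
    · exact le_self_add
    · exact le_add_self
  calc ENNReal.ofReal (iAvg I fun y => |f y|)
      ≤ ENNReal.ofReal (6 * iAvg J fun y => |f y|) := ENNReal.ofReal_le_ofReal hreal
    _ = 6 * ENNReal.ofReal (iAvg J fun y => |f y|) := by
        rw [ENNReal.ofReal_mul (by norm_num)]
        norm_num
    _ ≤ 6 * gridMaxFn i f x := mul_le_mul_right hJle 6
    _ ≤ 6 * (gridMaxFn 0 f x + gridMaxFn 1 f x) := mul_le_mul_right hgle 6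

end
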